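/- Under the coupled-dynamics setup, let R > 0 satisfy R ≤ (4/27)(1 − ‖A'_{t₀}‖)/(‖H‖³ b_max²) − α. Then for every Δt ∈ ℕ with 0 ≤ Δt ≤ R/α, the maximum deviation in b satisfies the linear-in-time bound ε_b(Δt) ≤ (α b_max / (2R)) · Δt. -/

import Mathlib

set_option maxHeartbeats 1000000

open Matrix Finset

/-- The spectral norm (ℓ²-operator norm) of a real square matrix. -/
noncomputable def specNorm {n : ℕ} (A : Matrix (Fin n) (Fin n) ℝ) : ℝ :=
  ‖Matrix.toEuclideanCLM (𝕜 := ℝ) A‖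

/-- The Euclidean norm of a real vector. -/
noncomputable def evNorm {n : ℕ} (v : Fin n → ℝ) : ℝ :=
  Real.sqrt (∑ i, v i ^ 2)

/-- `ε_A(Δt) = max_{t₀ ≤ τ ≤ t₀+Δt} ‖A_τ − A'_{t₀}‖` (spectral norm). -/
noncomputable def epsA {n : ℕ} (t₀ : ℕ)
    (A A' : ℕ → Matrix (Fin n) (Fin n) ℝ) (Δt : ℕ) : ℝ :=
  (Finset.Icc t₀ (t₀ + Δt)).sup'
    (Finset.nonempty_Icc.mpr (Nat.le_add_right _ _))
    (fun τ => specNorm (A τ - A' t₀))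

/-- `ε_b(Δt) = max_{t₀ ≤ τ ≤ t₀+Δt} ‖b_τ − b'_τ‖` (Euclidean norm). -/
noncomputable def epsB {n : ℕ} (t₀ : ℕ)
    (b b' : ℕ → (Fin n → ℝ)) (Δt : ℕ) : ℝ :=
  (Finset.Icc t₀ (t₀ + Δt)).sup'
    (Finset.nonempty_Icc.mpr (Nat.le_add_right _ _))
    (fun τ => evNorm (b τ - b' τ))

section Helpers

open scoped Matrix.Norms.L2Operator

lemma specNorm_eq {n : ℕ} (A : Matrix (Fin n) (Fin n) ℝ) : specNorm A = ‖A‖ := rfl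

lemma evNorm_eq {n : ℕ} (v : Fin n → ℝ) :
    evNorm v = ‖(WithLp.equiv 2 (Fin n → ℝ)).symm v‖ := by
  rw [EuclideanSpace.norm_eq]
  simp [evNorm, Real.norm_eq_abs, sq_abs]

lemma evNorm_nonneg' {n : ℕ} (v : Fin n → ℝ) : 0 ≤ evNorm v := Real.sqrt_nonneg _

lemma specNorm_nonneg' {n : ℕ} (A : Matrix (Fin n) (Fin n) ℝ) : 0 ≤ specNorm A :=
  norm_nonneg _

lemma evNorm_zero' {n : ℕ} : evNorm (0 : Fin n → ℝ) = 0 := by simp [evNorm_eq]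

lemma specNorm_zero' {n : ℕ} : specNorm (0 : Matrix (Fin n) (Fin n) ℝ) = 0 := by
  rw [specNorm_eq]; exact norm_zero

lemma evNorm_add_le {n : ℕ} (u v : Fin n → ℝ) :
    evNorm (u + v) ≤ evNorm u + evNorm v := by
  have hs : (WithLp.equiv 2 (Fin n → ℝ)).symm (u + v) =
      (WithLp.equiv 2 (Fin n → ℝ)).symm u + (WithLp.equiv 2 (Fin n → ℝ)).symm v := rfl
  simp only [evNorm_eq, hs]; exact norm_add_le _ _

lemma specNorm_sub_le {n : ℕ} (A B : Matrix (Fin n) (Fin n) ℝ) :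
    specNorm (A - B) ≤ specNorm A + specNorm B := norm_sub_le A B

lemma specNorm_mul_le {n : ℕ} (A B : Matrix (Fin n) (Fin n) ℝ) :
    specNorm (A * B) ≤ specNorm A * specNorm B := Matrix.l2_opNorm_mul A B

lemma specNorm_smul' {n : ℕ} (c : ℝ) (A : Matrix (Fin n) (Fin n) ℝ) :
    specNorm (c • A) = |c| * specNorm A := by
  show ‖c • A‖ = |c| * ‖A‖
  rw [norm_smul, Real.norm_eq_abs]

lemma evNorm_mulVec_le {n : ℕ} (A : Matrix (Fin n) (Fin n) ℝ) (v : Fin n → ℝ) :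
    evNorm (A *ᵥ v) ≤ specNorm A * evNorm v := by
  rw [evNorm_eq, evNorm_eq, specNorm_eq]
  exact Matrix.l2_opNorm_mulVec A ((WithLp.equiv 2 (Fin n → ℝ)).symm v)

lemma vecMulVec_mulVec' {n : ℕ} (u v y : Fin n → ℝ) :
    vecMulVec u v *ᵥ y = (v ⬝ᵥ y) • u := by
  ext i
  simp only [vecMulVec, mulVec, dotProduct, Pi.smul_apply, smul_eq_mul, Matrix.of_apply]
  rw [Finset.sum_mul]
  exact Finset.sum_congr rfl fun j _ => by ring

lemma specNorm_vecMulVec_le {n : ℕ} (u v : Fin n → ℝ) :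
    specNorm (vecMulVec u v) ≤ evNorm u * evNorm v := by
  show ‖Matrix.toEuclideanCLM (𝕜 := ℝ) (vecMulVec u v)‖ ≤ _
  apply ContinuousLinearMap.opNorm_le_bound _
    (mul_nonneg (evNorm_nonneg' u) (evNorm_nonneg' v))
  intro x
  have hx : x = (WithLp.equiv 2 (Fin n → ℝ)).symm (WithLp.equiv 2 (Fin n → ℝ) x) := rfl
  have hs : ∀ (c : ℝ) (w : Fin n → ℝ), (WithLp.equiv 2 (Fin n → ℝ)).symm (c • w) =
      c • (WithLp.equiv 2 (Fin n → ℝ)).symm w := fun _ _ => rfl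
  rw [hx]
  show ‖(WithLp.equiv 2 (Fin n → ℝ)).symm (vecMulVec u v *ᵥ (WithLp.equiv 2 (Fin n → ℝ) x))‖ ≤ _
  rw [vecMulVec_mulVec', hs, norm_smul, Real.norm_eq_abs]
  have h1 : v ⬝ᵥ (WithLp.equiv 2 (Fin n → ℝ)) x =
      inner (𝕜 := ℝ) ((WithLp.equiv 2 (Fin n → ℝ)).symm v) x := by
    simp [dotProduct, PiLp.inner_apply, RCLike.inner_apply, mul_comm]
  have hcs := abs_real_inner_le_norm ((WithLp.equiv 2 (Fin n → ℝ)).symm v) x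
  rw [h1, ← evNorm_eq u, ← hx]
  rw [← evNorm_eq v] at hcs
  have h2 := evNorm_nonneg' u
  nlinarith [mul_le_mul_of_nonneg_right hcs h2, norm_nonneg x]

end Helpers

/-- Linear-in-time deviation bound over a trajectory of length
`R/α`. -/
theorem lodo_deviation_linear_bound
    (n : ℕ) (hn : 1 ≤ n) (t₀ : ℕ) (α : ℝ) (hα : 0 < α)
    (H : Matrix (Fin n) (Fin n) ℝ) (s : ℕ → (Fin n → ℝ))
    (bmax : ℝ) (hbmax : 0 < bmax)
    (A A' : ℕ → Matrix (Fin n) (Fin n) ℝ) (b b' : ℕ → (Fin n → ℝ))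
    (hb0 : b t₀ = 0)
    (hbrec : ∀ t, t₀ ≤ t → b (t + 1) = A t *ᵥ b t - s t)
    (hArec : ∀ t, t₀ ≤ t →
      A (t + 1) = A t - α • (H * vecMulVec (b (t + 1)) (b t) * H ^ 2))
    (hA'0 : A' t₀ = A t₀) (hb'0 : b' t₀ = 0)
    (hb'rec : ∀ t, t₀ ≤ t → b' (t + 1) = A' t₀ *ᵥ b' t - s t)
    (hA'rec : ∀ t, t₀ ≤ t →
      A' (t + 1) = A' t - α • (H * vecMulVec (b' (t + 1)) (b' t) * H ^ 2))
    (hAnorm : specNorm (A' t₀) < 1)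
    (hb'bound : ∀ t, t₀ ≤ t → evNorm (b' t) ≤ bmax) :
    ∀ R : ℝ, 0 < R →
      R ≤ 4 / 27 * (1 - specNorm (A' t₀)) / (specNorm H ^ 3 * bmax ^ 2) - α →
      ∀ Δt : ℕ, (Δt : ℝ) ≤ R / α →
        epsB t₀ b b' Δt ≤ α * bmax / (2 * R) * Δt := by
  intro R hR0 hRle Δt hΔt
  set a := specNorm (A' t₀) with ha_def
  set h := specNorm H with hh_def
  have ha0 : 0 ≤ a := specNorm_nonneg' _
  have hH : 0 < h := by
    rcases (specNorm_nonneg' H).lt_or_eq with hlt | heq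
    · exact hlt
    · exfalso
      rw [← hh_def] at heq
      rw [← heq] at hRle
      norm_num at hRle
      linarith
  have hden : 0 < h ^ 3 * bmax ^ 2 := by positivity
  have hkey : 27 / 4 * R * (h ^ 3 * bmax ^ 2) ≤ 1 - a := by
    have h1 : R + α ≤ 4 / 27 * (1 - a) / (h ^ 3 * bmax ^ 2) := by linarith
    rw [le_div_iff₀ hden] at h1
    nlinarith
  set c := α * bmax / (2 * R) with hc_def
  have hc0 : 0 ≤ c := by positivity
  have hc2R : c * (2 * R) = α * bmax := by
    rw [hc_def]; field_simp
  -- 27/8 * α * h^3 * bmax^3 ≤ (1 - a) * c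
  have h27 : 27 / 8 * α * h ^ 3 * bmax ^ 3 ≤ (1 - a) * c := by
    have hmul := mul_le_mul_of_nonneg_right hkey (mul_pos hα hbmax).le
    have h2R : (0 : ℝ) < 2 * R := by linarith
    rw [← hc2R] at hmul
    nlinarith
  have hcRα : c * (R / α) = bmax / 2 := by
    rw [hc_def]; field_simp
  set C := 9 / 4 * α * h ^ 3 * bmax ^ 2 with hC_def
  have main : ∀ k : ℕ, (k : ℝ) ≤ R / α →
      evNorm (b (t₀ + k) - b' (t₀ + k)) ≤ c * k ∧
      specNorm (A (t₀ + k) - A' t₀) ≤ C * k := by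
    intro k
    induction k with
    | zero =>
      intro _
      constructor
      · simp only [Nat.add_zero, hb0, hb'0, sub_zero, Nat.cast_zero, mul_zero]
        rw [evNorm_zero']
      · simp only [Nat.add_zero, Nat.cast_zero, mul_zero]
        rw [hA'0, sub_self, specNorm_zero']
    | succ k ih =>
      intro hk1
      have hk : (k : ℝ) ≤ R / α := by
        refine le_trans ?_ hk1
        push_cast; linarith
      obtain ⟨hd, hE⟩ := ih hk
      have ht : t₀ ≤ t₀ + k := Nat.le_add_right _ _
      have hck : c * k ≤ bmax / 2 := by
        calc c * k ≤ c * (R / α) := mul_le_mul_of_nonneg_left hk hc0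
          _ = bmax / 2 := hcRα
      have hck1 : c * ((k : ℝ) + 1) ≤ bmax / 2 := by
        calc c * ((k : ℝ) + 1) ≤ c * (R / α) := by
              refine mul_le_mul_of_nonneg_left ?_ hc0
              push_cast at hk1; linarith
          _ = bmax / 2 := hcRα
      have hbk : evNorm (b (t₀ + k)) ≤ 3 / 2 * bmax := by
        have h1 := evNorm_add_le (b (t₀ + k) - b' (t₀ + k)) (b' (t₀ + k))
        rw [sub_add_cancel] at h1
        have h2 := hb'bound _ ht
        linarith
      have heq : t₀ + (k + 1) = (t₀ + k) + 1 := rfl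
      -- deviation step
      have hstep : b (t₀ + (k + 1)) - b' (t₀ + (k + 1)) =
          A' t₀ *ᵥ (b (t₀ + k) - b' (t₀ + k)) + (A (t₀ + k) - A' t₀) *ᵥ b (t₀ + k) := by
        rw [heq, hbrec _ ht, hb'rec _ ht, Matrix.mulVec_sub, Matrix.sub_mulVec]
        abel
      have hdnew : evNorm (b (t₀ + (k + 1)) - b' (t₀ + (k + 1))) ≤ c * (k + 1 : ℕ) := by
        rw [hstep]
        have h1 := evNorm_add_le (A' t₀ *ᵥ (b (t₀ + k) - b' (t₀ + k)))
          ((A (t₀ + k) - A' t₀) *ᵥ b (t₀ + k))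
        have h2 := evNorm_mulVec_le (A' t₀) (b (t₀ + k) - b' (t₀ + k))
        have h3 := evNorm_mulVec_le (A (t₀ + k) - A' t₀) (b (t₀ + k))
        have h4 : specNorm (A' t₀) * evNorm (b (t₀ + k) - b' (t₀ + k)) ≤ a * (c * k) := by
          rw [← ha_def]
          exact mul_le_mul_of_nonneg_left hd ha0
        have h5 : specNorm (A (t₀ + k) - A' t₀) * evNorm (b (t₀ + k)) ≤
            (C * k) * (3 / 2 * bmax) := by
          apply mul_le_mul hE hbk (evNorm_nonneg' _)
          exact le_trans (specNorm_nonneg' _) hE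
        have hkn : (0 : ℝ) ≤ (k : ℝ) := Nat.cast_nonneg k
        have h7 : C * (3 / 2 * bmax) ≤ (1 - a) * c := by
          rw [hC_def]; linarith [h27]
        have h6 : (C * k) * (3 / 2 * bmax) ≤ (1 - a) * c * k := by
          have h8 := mul_le_mul_of_nonneg_right h7 hkn
          linarith [h8]
        push_cast
        linarith [h1, h2, h3, h4, h5, h6]
      -- new b bound
      have hbk1 : evNorm (b (t₀ + (k + 1))) ≤ 3 / 2 * bmax := by
        have h1 := evNorm_add_le (b (t₀ + (k + 1)) - b' (t₀ + (k + 1))) (b' (t₀ + (k + 1)))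
        rw [sub_add_cancel] at h1
        have h2 := hb'bound (t₀ + (k + 1)) (Nat.le_add_right _ _)
        have hdnew' : evNorm (b (t₀ + (k + 1)) - b' (t₀ + (k + 1))) ≤ c * ((k : ℝ) + 1) := by
          refine le_trans hdnew (le_of_eq ?_)
          push_cast
          ring
        linarith [hck1, hdnew']
      -- matrix deviation step
      have hEstep : A (t₀ + (k + 1)) - A' t₀ =
          (A (t₀ + k) - A' t₀) -
            α • (H * vecMulVec (b ((t₀ + k) + 1)) (b (t₀ + k)) * H ^ 2) := by
        rw [heq, hArec _ ht, sub_right_comm]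
      have hEnew : specNorm (A (t₀ + (k + 1)) - A' t₀) ≤ C * (k + 1 : ℕ) := by
        rw [hEstep]
        have h1 := specNorm_sub_le (A (t₀ + k) - A' t₀)
          (α • (H * vecMulVec (b ((t₀ + k) + 1)) (b (t₀ + k)) * H ^ 2))
        have hV : specNorm (vecMulVec (b ((t₀ + k) + 1)) (b (t₀ + k))) ≤
            (3 / 2 * bmax) * (3 / 2 * bmax) := by
          refine le_trans (specNorm_vecMulVec_le _ _) ?_
          rw [← heq]
          exact mul_le_mul hbk1 hbk (evNorm_nonneg' _) (by linarith)
        have hm : specNorm (H * vecMulVec (b ((t₀ + k) + 1)) (b (t₀ + k)) * H ^ 2) ≤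
            h * ((3 / 2 * bmax) * (3 / 2 * bmax)) * (h * h) := by
          refine le_trans (specNorm_mul_le _ _) ?_
          have hHV : specNorm (H * vecMulVec (b ((t₀ + k) + 1)) (b (t₀ + k))) ≤
              h * ((3 / 2 * bmax) * (3 / 2 * bmax)) := by
            refine le_trans (specNorm_mul_le _ _) ?_
            rw [← hh_def]
            exact mul_le_mul_of_nonneg_left hV hH.le
          have hH2 : specNorm (H ^ 2) ≤ h * h := by
            rw [sq]
            exact le_trans (specNorm_mul_le _ _) (by rw [← hh_def])
          exact mul_le_mul hHV hH2 (specNorm_nonneg' _) (by positivity)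
        have hsm : specNorm (α • (H * vecMulVec (b ((t₀ + k) + 1)) (b (t₀ + k)) * H ^ 2)) ≤
            α * (h * ((3 / 2 * bmax) * (3 / 2 * bmax)) * (h * h)) := by
          rw [specNorm_smul', abs_of_pos hα]
          exact mul_le_mul_of_nonneg_left hm hα.le
        have hsm' : specNorm (α • (H * vecMulVec (b ((t₀ + k) + 1)) (b (t₀ + k)) * H ^ 2)) ≤
            C := by
          refine le_trans hsm (le_of_eq ?_)
          rw [hC_def]; ring
        push_cast
        linarith [h1, hE, hsm']
      exact ⟨hdnew, hEnew⟩
  -- conclude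
  apply Finset.sup'_le
  intro τ hτ
  rw [Finset.mem_Icc] at hτ
  obtain ⟨hτ1, hτ2⟩ := hτ
  obtain ⟨k, rfl⟩ : ∃ k, τ = t₀ + k := ⟨τ - t₀, by omega⟩
  have hkΔ : k ≤ Δt := by omega
  have hkR : (k : ℝ) ≤ R / α := le_trans (by exact_mod_cast hkΔ) hΔt
  have hmain := (main k hkR).1
  refine le_trans hmain ?_
  exact mul_le_mul_of_nonneg_left (by exact_mod_cast hkΔ) hc0
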